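/- Let I ⊂ (0, π) be an interval and u : I → ℝ a differentiable function with 0 < u(θ) < u_max for all θ ∈ I, satisfying the ordinary differential equation (c(u(θ))² − u(θ)²)·u′(θ) + cot θ·c(u(θ))²·u(θ) = 0 for all θ ∈ I. Then the quantity (2c₀² − (γ−1)u(θ)²)·(u(θ)·sin θ)^{γ−1} is constant on I. -/

import Mathlib

open Real Set Filter Topology

/-- Maximal speed `u_max = √(2c₀²/(γ−1))`. -/
noncomputable def uMax (γ c₀ : ℝ) : ℝ := Real.sqrt (2 * c₀ ^ 2 / (γ - 1))

/-- Critical (sonic) speed `c_* = √(2c₀²/(γ+1))`. -/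
noncomputable def cStar (γ c₀ : ℝ) : ℝ := Real.sqrt (2 * c₀ ^ 2 / (γ + 1))

/-- Local sonic speed `c(u) = √(c₀² − ((γ−1)/2)u²)`. -/
noncomputable def sonic (γ c₀ u : ℝ) : ℝ := Real.sqrt (c₀ ^ 2 - (γ - 1) / 2 * u ^ 2)

/-- Density `ρ(u) = ((c₀² − ((γ−1)/2)u²)/γ)^{1/(γ−1)}`. -/
noncomputable def dens (γ c₀ u : ℝ) : ℝ :=
  ((c₀ ^ 2 - (γ - 1) / 2 * u ^ 2) / γ) ^ ((1 : ℝ) / (γ - 1))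

/-- Mass flux `F(u) = ρ(u)·u`. -/
noncomputable def flux (γ c₀ u : ℝ) : ℝ := dens γ c₀ u * u

/-- Pressure `p(u) = ρ(u)^γ`. -/
noncomputable def pres (γ c₀ u : ℝ) : ℝ := dens γ c₀ u ^ γ

theorem first_integral_on_sphere (γ c₀ : ℝ) (hγ : 1 < γ) (hc₀ : 0 < c₀)
    (I : Set ℝ) (hI : I ⊆ Set.Ioo 0 π) (hIc : I.OrdConnected)
    (u u' : ℝ → ℝ)
    (hderiv : ∀ θ ∈ I, HasDerivWithinAt u (u' θ) I θ)
    (hrange : ∀ θ ∈ I, u θ ∈ Set.Ioo 0 (uMax γ c₀))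
    (hode : ∀ θ ∈ I,
      (sonic γ c₀ (u θ) ^ 2 - u θ ^ 2) * u' θ +
        Real.cot θ * sonic γ c₀ (u θ) ^ 2 * u θ = 0) :
    ∀ θ₁ ∈ I, ∀ θ₂ ∈ I,
      (2 * c₀ ^ 2 - (γ - 1) * u θ₁ ^ 2) * (u θ₁ * Real.sin θ₁) ^ (γ - 1) =
      (2 * c₀ ^ 2 - (γ - 1) * u θ₂ ^ 2) * (u θ₂ * Real.sin θ₂) ^ (γ - 1) := by
  set G : ℝ → ℝ := fun θ => (2 * c₀ ^ 2 - (γ - 1) * u θ ^ 2) * (u θ * Real.sin θ) ^ (γ - 1)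
    with hG
  have hkey : ∀ θ ∈ I, HasDerivWithinAt G 0 I θ := by
    intro θ hθ
    obtain ⟨hθ0, hθπ⟩ := hI hθ
    obtain ⟨hu0, huM⟩ := hrange θ hθ
    have hs : 0 < Real.sin θ := Real.sin_pos_of_pos_of_lt_pi hθ0 hθπ
    have hf : 0 < u θ * Real.sin θ := mul_pos hu0 hs
    -- positivity of sonic argument
    have hγ1 : (0:ℝ) < γ - 1 := by linarith
    have huM2 : u θ ^ 2 < 2 * c₀ ^ 2 / (γ - 1) := by
      have := (Real.lt_sqrt hu0.le).mp huM
      simpa [uMax] using this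
    have hpos : 0 < c₀ ^ 2 - (γ - 1) / 2 * u θ ^ 2 := by
      have h2 := (lt_div_iff₀ hγ1).mp huM2
      nlinarith [h2]
    have hson : sonic γ c₀ (u θ) ^ 2 = c₀ ^ 2 - (γ - 1) / 2 * u θ ^ 2 :=
      Real.sq_sqrt hpos.le
    -- rewrite ODE
    have hode' : (c₀ ^ 2 - (γ - 1) / 2 * u θ ^ 2 - u θ ^ 2) * u' θ * Real.sin θ
        + (c₀ ^ 2 - (γ - 1) / 2 * u θ ^ 2) * u θ * Real.cos θ = 0 := by
      have h := hode θ hθ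
      rw [hson, Real.cot_eq_cos_div_sin] at h
      field_simp at h
      nlinarith [h, hs]
    -- derivative computation
    have hu := hderiv θ hθ
    have hsin : HasDerivWithinAt (fun θ => Real.sin θ) (Real.cos θ) I θ :=
      (Real.hasDerivAt_sin θ).hasDerivWithinAt
    have hfd : HasDerivWithinAt (fun θ => u θ * Real.sin θ)
        (u' θ * Real.sin θ + u θ * Real.cos θ) I θ := hu.mul hsin
    have hpow : HasDerivWithinAt (fun θ => (u θ * Real.sin θ) ^ (γ - 1))
        ((u' θ * Real.sin θ + u θ * Real.cos θ) * (γ - 1)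
          * (u θ * Real.sin θ) ^ (γ - 1 - 1)) I θ :=
      hfd.rpow_const (Or.inl hf.ne')
    have hA : HasDerivWithinAt (fun θ => 2 * c₀ ^ 2 - (γ - 1) * u θ ^ 2)
        (-( (γ - 1) * (2 * u θ * u' θ))) I θ := by
      have := ((hu.pow 2).const_mul (γ - 1)).const_sub (2 * c₀ ^ 2)
      refine this.congr_deriv ?_
      ring
    have hGd := hA.mul hpow
    refine hGd.congr_deriv (Eq.symm ?_)
    -- show the derivative expression is zero
    have hsplit : (u θ * Real.sin θ) ^ (γ - 1)
        = (u θ * Real.sin θ) ^ (γ - 1 - 1) * (u θ * Real.sin θ) := by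
      rw [← Real.rpow_add_one hf.ne']
      ring_nf
    rw [hsplit]
    set P := (u θ * Real.sin θ) ^ (γ - 1 - 1)
    linear_combination (-2 * (γ - 1) * P) * hode'
  intro θ₁ h₁ θ₂ h₂
  have hconv : Convex ℝ I := convex_iff_ordConnected.mpr hIc
  have : ‖G θ₁ - G θ₂‖ ≤ 0 * ‖θ₁ - θ₂‖ :=
    hconv.norm_image_sub_le_of_norm_hasDerivWithin_le (f' := fun _ => (0:ℝ)) hkey
      (fun x _ => by simp) h₂ h₁
  simp only [zero_mul, norm_le_zero_iff, sub_eq_zero] at this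
  exact this
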